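/- Existence and uniqueness for the second-order IEQ-DG scheme (Theorem 3.2, solvability of the linear system (3.19)): let Δt > 0 and let T : H → H be a self-adjoint bounded linear operator. Then for every f ∈ H there exists a unique pair (u, q) ∈ V × V such that for all φ, ψ ∈ V: (1/Δt)⟨u, φ⟩ + (1/4)⟨T(T u), φ⟩ + (1/2) A(φ, q) + (1/2) b(u, φ) = ⟨f, φ⟩ and A(u, ψ) = ⟨q, ψ⟩. -/

import Mathlib

set_option maxHeartbeats 1000000


/-- Existence and uniqueness for the second-order IEQ-DG scheme
(Theorem 3.2, solvability of the linear system (3.19)). -/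
theorem stmt_8
    {H : Type*} [NormedAddCommGroup H] [InnerProductSpace ℝ H] [CompleteSpace H]
    (V : Submodule ℝ H) [FiniteDimensional ℝ V]
    (A : V →ₗ[ℝ] V →ₗ[ℝ] ℝ)
    (b : V →ₗ[ℝ] V →ₗ[ℝ] ℝ)
    (hb_symm : ∀ x y : V, b x y = b y x)
    (hb_pos : ∀ x : V, 0 ≤ b x x)
    (Δt : ℝ) (hΔt : 0 < Δt)
    (T : H →L[ℝ] H)
    (hT : ∀ x y : H, (inner ℝ (T x) y : ℝ) = (inner ℝ x (T y) : ℝ))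
    (f : H) :
    ∃! uq : V × V,
      (∀ φ : V,
        (1/Δt) * (inner ℝ (uq.1 : H) (φ : H) : ℝ)
          + (1/4) * (inner ℝ (T (T (uq.1 : H))) (φ : H) : ℝ)
          + (1/2) * A φ uq.2 + (1/2) * b uq.1 φ = (inner ℝ f (φ : H) : ℝ))
      ∧ (∀ ψ : V, A uq.1 ψ = (inner ℝ (uq.2 : H) (ψ : H) : ℝ)) := by
  classical
  -- combined bilinear form on V × V
  set B : (V × V) →ₗ[ℝ] (V × V) →ₗ[ℝ] ℝ :=
    LinearMap.mk₂ ℝ (fun p r =>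
      (1/Δt) * (inner ℝ (p.1 : H) (r.1 : H) : ℝ)
        + (1/4) * (inner ℝ (T (T (p.1 : H))) (r.1 : H) : ℝ)
        + (1/2) * A r.1 p.2 + (1/2) * b p.1 r.1
        + (A p.1 r.2 - (inner ℝ (p.2 : H) (r.2 : H) : ℝ)))
      (by
        intro p p' r
        simp [Prod.fst_add, Prod.snd_add, Submodule.coe_add, inner_add_left,
          inner_add_right, map_add, LinearMap.add_apply]
        ring)
      (by
        intro c p r
        simp [Prod.smul_fst, Prod.smul_snd, Submodule.coe_smul, inner_smul_left,
          inner_smul_right, map_smul, LinearMap.smul_apply, smul_eq_mul]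
        ring)
      (by
        intro p r r'
        simp [Prod.fst_add, Prod.snd_add, Submodule.coe_add, inner_add_left,
          inner_add_right, map_add, LinearMap.add_apply]
        ring)
      (by
        intro c p r
        simp [Prod.smul_fst, Prod.smul_snd, Submodule.coe_smul, inner_smul_left,
          inner_smul_right, map_smul, LinearMap.smul_apply, smul_eq_mul]
        ring)
    with hB
  have hBapp : ∀ p r : V × V, B p r =
      (1/Δt) * (inner ℝ (p.1 : H) (r.1 : H) : ℝ)
        + (1/4) * (inner ℝ (T (T (p.1 : H))) (r.1 : H) : ℝ)
        + (1/2) * A r.1 p.2 + (1/2) * b p.1 r.1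
        + (A p.1 r.2 - (inner ℝ (p.2 : H) (r.2 : H) : ℝ)) := fun p r => rfl
  -- injectivity of B viewed as map into the dual
  have hinj : Function.Injective B := by
    rw [← LinearMap.ker_eq_bot, LinearMap.ker_eq_bot']
    intro p hp
    have h1 : B p (p.1, 0) = 0 := by rw [hp]; rfl
    have h2 : B p (0, p.2) = 0 := by rw [hp]; rfl
    rw [hBapp] at h1 h2
    simp only [Submodule.coe_zero, inner_zero_right, map_zero, LinearMap.zero_apply,
      mul_zero, add_zero, zero_add, sub_zero, zero_sub] at h1 h2
    -- h2 : A p.1 p.2 - ⟪p.2, p.2⟫ = 0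
    have hA : A p.1 p.2 = (inner ℝ (p.2 : H) (p.2 : H) : ℝ) := by linarith
    have hTT : (inner ℝ (T (T (p.1 : H))) (p.1 : H) : ℝ)
        = (inner ℝ (T (p.1 : H)) (T (p.1 : H)) : ℝ) := by
      rw [hT]
    have hApq : (1/2) * A p.1 p.2 = (1/2) * (inner ℝ (p.2 : H) (p.2 : H) : ℝ) := by
      rw [hA]
    have key : (1/Δt) * (inner ℝ (p.1 : H) (p.1 : H) : ℝ)
        + (1/4) * (inner ℝ (T (p.1 : H)) (T (p.1 : H)) : ℝ)
        + (1/2) * (inner ℝ (p.2 : H) (p.2 : H) : ℝ) + (1/2) * b p.1 p.1 = 0 := by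
      rw [← hApq, ← hTT]
      linarith [h1]
    have n1 : (0:ℝ) ≤ (inner ℝ (p.1 : H) (p.1 : H) : ℝ) := real_inner_self_nonneg
    have n2 : (0:ℝ) ≤ (inner ℝ (T (p.1 : H)) (T (p.1 : H)) : ℝ) := real_inner_self_nonneg
    have n3 : (0:ℝ) ≤ (inner ℝ (p.2 : H) (p.2 : H) : ℝ) := real_inner_self_nonneg
    have n4 : (0:ℝ) ≤ b p.1 p.1 := hb_pos _
    have hΔt' : 0 < 1/Δt := by positivity
    have t1 : (0:ℝ) ≤ (1/Δt) * (inner ℝ (p.1 : H) (p.1 : H) : ℝ) := mul_nonneg hΔt'.le n1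
    have hq : (inner ℝ (p.2 : H) (p.2 : H) : ℝ) = 0 := by linarith
    have h1Δ : (1/Δt) * (inner ℝ (p.1 : H) (p.1 : H) : ℝ) = 0 := by linarith
    have hu : (inner ℝ (p.1 : H) (p.1 : H) : ℝ) = 0 :=
      (mul_eq_zero.mp h1Δ).resolve_left (one_div_ne_zero hΔt.ne')
    have hu0 : (p.1 : H) = 0 := by
      rwa [inner_self_eq_zero] at hu
    have hq0 : (p.2 : H) = 0 := by
      rwa [inner_self_eq_zero] at hq
    have : p.1 = 0 := Subtype.ext hu0
    have : p.2 = 0 := Subtype.ext hq0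
    exact Prod.ext ‹p.1 = 0› ‹p.2 = 0›
  -- surjectivity onto the dual
  have hdim : Module.finrank ℝ (V × V) = Module.finrank ℝ (Module.Dual ℝ (V × V)) :=
    (Subspace.dual_finrank_eq).symm
  have hsurj : Function.Surjective B :=
    (LinearMap.injective_iff_surjective_of_finrank_eq_finrank hdim).mp hinj
  -- the RHS functional
  set G : (V × V) →ₗ[ℝ] ℝ :=
    { toFun := fun r => (inner ℝ f (r.1 : H) : ℝ)
      map_add' := by intro r r'; simp [inner_add_right]
      map_smul' := by intro c r; simp [inner_smul_right] }
    with hG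
  obtain ⟨p, hp⟩ := hsurj G
  -- characterize solutions
  have hchar : ∀ uq : V × V,
      ((∀ φ : V,
        (1/Δt) * (inner ℝ (uq.1 : H) (φ : H) : ℝ)
          + (1/4) * (inner ℝ (T (T (uq.1 : H))) (φ : H) : ℝ)
          + (1/2) * A φ uq.2 + (1/2) * b uq.1 φ = (inner ℝ f (φ : H) : ℝ))
      ∧ (∀ ψ : V, A uq.1 ψ = (inner ℝ (uq.2 : H) (ψ : H) : ℝ))) ↔ B uq = G := by
    intro uq
    constructor
    · rintro ⟨he1, he2⟩
      refine LinearMap.ext fun r => ?_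
      rw [hBapp]
      have := he1 r.1
      have := he2 r.2
      show _ = (inner ℝ f (r.1 : H) : ℝ)
      linarith
    · intro h
      constructor
      · intro φ
        have := DFunLike.congr_fun h (φ, 0)
        rw [hBapp] at this
        simpa [hG] using this
      · intro ψ
        have := DFunLike.congr_fun h (0, ψ)
        rw [hBapp] at this
        simp only [Submodule.coe_zero, inner_zero_right, map_zero, LinearMap.zero_apply,
          mul_zero, add_zero, zero_add, zero_mul] at this
        have hG0 : G (0, ψ) = (inner ℝ f (((0:V)) : H) : ℝ) := rfl
        rw [hG0] at this
        simp only [Submodule.coe_zero, inner_zero_right] at this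
        linarith
  refine ⟨p, (hchar p).mpr hp, ?_⟩
  intro y hy
  exact hinj (((hchar y).mp hy).trans hp.symm)
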